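/- Let v ∈ V be nonzero and suppose the function X ↦ ‖m_𝔞(exp(π(X))v)‖² attains its infimum over 𝔞, i.e., there exists X₀ ∈ 𝔞 with ‖m_𝔞(exp(π(X₀))v)‖ ≤ ‖m_𝔞(exp(π(X))v)‖ for all X ∈ 𝔞. Then mcc(R(v)) lies in the intrinsic interior of the convex hull of R(v), and m_𝔞(exp(π(X₀))v) = mcc(R(v)). -/

import Mathlib

open scoped InnerProductSpace
open Finset
open scoped Classical

/-- The (restricted) moment map of a linear family of operators `π` on an inner
product space `V`: `m v` is the unique element of `E` with
`⟪m v, X⟫ = ⟪π X v, v⟫ / ‖v‖²` for all `X`. -/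
noncomputable def momentMap {E V : Type*} [NormedAddCommGroup E] [InnerProductSpace ℝ E]
    [FiniteDimensional ℝ E] [NormedAddCommGroup V] [InnerProductSpace ℝ V]
    (π : E →ₗ[ℝ] V →L[ℝ] V) (v : V) : E :=
  (InnerProductSpace.toDual ℝ E).symm <| LinearMap.toContinuousLinearMap
    { toFun := fun X => ⟪(π X) v, v⟫_ℝ / ‖v‖ ^ 2
      map_add' := fun X Y => by
        simp [map_add, ContinuousLinearMap.add_apply, inner_add_left, add_div]
      map_smul' := fun c X => by
        simp [map_smul, ContinuousLinearMap.smul_apply, inner_smul_left, mul_div_assoc] }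

set_option maxHeartbeats 1000000
set_option synthInstance.maxHeartbeats 400000

lemma exp_sq_eq (x : ℝ) : Real.exp x ^ 2 = Real.exp (2 * x) := by
  rw [sq, ← Real.exp_add]; ring_nf

lemma exp_apply_eigenvector {V : Type*} [NormedAddCommGroup V] [InnerProductSpace ℝ V]
    [FiniteDimensional ℝ V] (A : V →L[ℝ] V) (w : V) (r : ℝ) (hw : A w = r • w) :
    NormedSpace.exp A w = Real.exp r • w := by
  have hpow : ∀ n : ℕ, (A ^ n) w = r ^ n • w := by
    intro n
    induction n with
    | zero => simp
    | succ n ih =>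
      rw [pow_succ, ContinuousLinearMap.mul_apply, hw, map_smul, ih, smul_smul, pow_succ, mul_comm r (r ^ n)]
  have h1 : HasSum (fun n : ℕ => ((n.factorial : ℝ))⁻¹ • A ^ n) (NormedSpace.exp A) := by
    rw [NormedSpace.exp_eq_tsum (𝕂 := ℝ)]
    exact (NormedSpace.expSeries_summable' A).hasSum
  have h2 := h1.mapL (ContinuousLinearMap.apply ℝ V w)
  simp only [ContinuousLinearMap.apply_apply, ContinuousLinearMap.smul_apply, hpow,
    smul_smul] at h2
  have h3 : HasSum (fun n : ℕ => ((n.factorial : ℝ))⁻¹ * r ^ n) (Real.exp r) := by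
    rw [Real.exp_eq_exp_ℝ, NormedSpace.exp_eq_tsum (𝕂 := ℝ)]
    have := (NormedSpace.expSeries_summable' (𝕂 := ℝ) r).hasSum
    simpa [smul_eq_mul] using this
  exact h2.unique (h3.smul_const w)

lemma momentMap_inner' {E V : Type*} [NormedAddCommGroup E] [InnerProductSpace ℝ E]
    [FiniteDimensional ℝ E] [NormedAddCommGroup V] [InnerProductSpace ℝ V]
    (π : E →ₗ[ℝ] V →L[ℝ] V) (w : V) (Y : E) :
    ⟪momentMap π w, Y⟫_ℝ = ⟪(π Y) w, w⟫_ℝ / ‖w‖ ^ 2 := by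
  rw [momentMap, InnerProductSpace.toDual_symm_apply]
  rfl
lemma core_min {E : Type*} [NormedAddCommGroup E] [InnerProductSpace ℝ E]
    [FiniteDimensional ℝ E]
    (s : Finset E) (hs : s.Nonempty) (w : E → ℝ) (hw : ∀ α ∈ s, 0 < w α)
    (m₀ : E) (hm₀ : m₀ = (∑ α ∈ s, w α)⁻¹ • ∑ α ∈ s, w α • α)
    (hmin : ∀ t : ℝ, ‖m₀‖ ≤ ‖(∑ α ∈ s, w α * Real.exp (2 * ⟪α, m₀⟫_ℝ * t))⁻¹ •
        ∑ α ∈ s, (w α * Real.exp (2 * ⟪α, m₀⟫_ℝ * t)) • α‖) :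
    ∀ α ∈ s, ⟪α, m₀⟫_ℝ = ‖m₀‖ ^ 2 := by
  have hZ0 : 0 < ∑ α ∈ s, w α := Finset.sum_pos hw hs
  have hZne : (∑ α ∈ s, w α) ≠ 0 := ne_of_gt hZ0
  have hcoef : ∀ α ∈ s, HasDerivAt (fun t : ℝ => w α * Real.exp (2 * ⟪α, m₀⟫_ℝ * t))
      (w α * (2 * ⟪α, m₀⟫_ℝ)) 0 := by
    intro α _
    have h1 : HasDerivAt (fun t : ℝ => 2 * ⟪α, m₀⟫_ℝ * t) (2 * ⟪α, m₀⟫_ℝ) 0 := by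
      simpa using (hasDerivAt_id (0 : ℝ)).const_mul (2 * ⟪α, m₀⟫_ℝ)
    have h3 := (h1.exp).const_mul (w α)
    simpa using h3
  have hZ : HasDerivAt (fun t : ℝ => ∑ α ∈ s, w α * Real.exp (2 * ⟪α, m₀⟫_ℝ * t))
      (∑ α ∈ s, w α * (2 * ⟪α, m₀⟫_ℝ)) 0 := HasDerivAt.fun_sum hcoef
  have hN : HasDerivAt (fun t : ℝ => ∑ α ∈ s, (w α * Real.exp (2 * ⟪α, m₀⟫_ℝ * t)) • α)
      (∑ α ∈ s, (w α * (2 * ⟪α, m₀⟫_ℝ)) • α) 0 :=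
    HasDerivAt.fun_sum fun α hα => (hcoef α hα).smul_const α
  have hZinv := hZ.inv (by simpa using hZne)
  have hF := hZinv.smul hN
  have hg := hF.inner (𝕜 := ℝ) hF
  have hlm : IsLocalMin (fun t : ℝ =>
      ⟪(∑ α ∈ s, w α * Real.exp (2 * ⟪α, m₀⟫_ℝ * t))⁻¹ •
          ∑ α ∈ s, (w α * Real.exp (2 * ⟪α, m₀⟫_ℝ * t)) • α,
        (∑ α ∈ s, w α * Real.exp (2 * ⟪α, m₀⟫_ℝ * t))⁻¹ •
          ∑ α ∈ s, (w α * Real.exp (2 * ⟪α, m₀⟫_ℝ * t)) • α⟫_ℝ) 0 := by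
    refine Filter.Eventually.of_forall fun t => ?_
    simp only [real_inner_self_eq_norm_sq, mul_zero, Real.exp_zero, mul_one, ← hm₀]
    exact pow_le_pow_left₀ (norm_nonneg _) (hmin t) 2
  have hD0 := hlm.hasDerivAt_eq_zero hg
  simp only [Pi.inv_apply, Pi.smul_apply', mul_zero, Real.exp_zero, mul_one] at hD0
  have key : ∑ α ∈ s, w α • α = (∑ α ∈ s, w α) • m₀ := by
    rw [hm₀, smul_smul, mul_inv_cancel₀ hZne, one_smul]
  rw [key] at hD0
  have hc0 : (∑ α ∈ s, w α)⁻¹ • ((∑ α ∈ s, w α) • m₀) = m₀ := by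
    rw [smul_smul, inv_mul_cancel₀ hZne, one_smul]
  rw [hc0] at hD0
  rw [real_inner_comm] at hD0
  have hD1 : ⟪(∑ α ∈ s, w α)⁻¹ • (∑ α ∈ s, (w α * (2 * ⟪α, m₀⟫_ℝ)) • α) +
      (-(∑ α ∈ s, w α * (2 * ⟪α, m₀⟫_ℝ)) / (∑ α ∈ s, w α) ^ 2) •
        ((∑ α ∈ s, w α) • m₀), m₀⟫_ℝ = 0 := by linarith
  simp only [inner_add_left, real_inner_smul_left, sum_inner] at hD1
  have hS1 : ∑ α ∈ s, w α * ⟪α, m₀⟫_ℝ = (∑ α ∈ s, w α) * ⟪m₀, m₀⟫_ℝ := by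
    have := congrArg (fun z : E => ⟪z, m₀⟫_ℝ) key
    simpa [sum_inner, real_inner_smul_left] using this
  have e1 : ∑ α ∈ s, w α * (2 * ⟪α, m₀⟫_ℝ) * ⟪α, m₀⟫_ℝ =
      2 * ∑ α ∈ s, w α * ⟪α, m₀⟫_ℝ ^ 2 := by
    rw [Finset.mul_sum]; exact Finset.sum_congr rfl fun α _ => by ring
  have e2 : ∑ α ∈ s, w α * (2 * ⟪α, m₀⟫_ℝ) = 2 * ∑ α ∈ s, w α * ⟪α, m₀⟫_ℝ := by
    rw [Finset.mul_sum]; exact Finset.sum_congr rfl fun α _ => by ring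
  rw [e1, e2, hS1] at hD1
  have hQ : ∑ α ∈ s, w α * ⟪α, m₀⟫_ℝ ^ 2 = (∑ α ∈ s, w α) * ⟪m₀, m₀⟫_ℝ ^ 2 := by
    field_simp at hD1
    have h8 : (2 * (∑ α ∈ s, w α) ^ 2) * (∑ α ∈ s, w α * ⟪α, m₀⟫_ℝ ^ 2) =
        (2 * (∑ α ∈ s, w α) ^ 2) * ((∑ α ∈ s, w α) * ⟪m₀, m₀⟫_ℝ ^ 2) := by
      linear_combination (∑ α ∈ s, w α) ^ 2 * hD1
    exact mul_left_cancel₀ (by positivity) h8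
  have hsq : ∑ α ∈ s, w α * (⟪α, m₀⟫_ℝ - ⟪m₀, m₀⟫_ℝ) ^ 2 = 0 := by
    have expand : ∀ α ∈ s, w α * (⟪α, m₀⟫_ℝ - ⟪m₀, m₀⟫_ℝ) ^ 2 =
        w α * ⟪α, m₀⟫_ℝ ^ 2 - 2 * ⟪m₀, m₀⟫_ℝ * (w α * ⟪α, m₀⟫_ℝ) +
          ⟪m₀, m₀⟫_ℝ ^ 2 * w α := fun α _ => by ring
    rw [Finset.sum_congr rfl expand, Finset.sum_add_distrib, Finset.sum_sub_distrib,
      ← Finset.mul_sum, ← Finset.mul_sum, hS1, hQ]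
    ring
  intro α hα
  have h6 := (Finset.sum_eq_zero_iff_of_nonneg
    (fun β hβ => mul_nonneg (hw β hβ).le (sq_nonneg _))).1 hsq α hα
  have h7 : ⟪α, m₀⟫_ℝ - ⟪m₀, m₀⟫_ℝ = 0 := by
    rcases mul_eq_zero.1 h6 with h | h
    · exact absurd h (ne_of_gt (hw α hα))
    · exact pow_eq_zero_iff two_ne_zero |>.1 h
  rw [← real_inner_self_eq_norm_sq]
  linarith
set_option maxHeartbeats 1000000
set_option synthInstance.maxHeartbeats 400000

lemma sum_smul_mem_intrinsicInterior {E : Type*} [NormedAddCommGroup E]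
    [InnerProductSpace ℝ E] [FiniteDimensional ℝ E] (s : Finset E) (p : E → ℝ)
    (hpos : ∀ α ∈ s, 0 < p α) (hsum : ∑ α ∈ s, p α = 1) :
    ∑ α ∈ s, p α • α ∈ intrinsicInterior ℝ (convexHull ℝ (s : Set E)) := by
  set m := ∑ α ∈ s, p α • α with hm_def
  have hs : s.Nonempty := by
    rcases s.eq_empty_or_nonempty with h | h
    · rw [h] at hsum; simp at hsum
    · exact h
  obtain ⟨α₀, hα₀⟩ := hs
  have hm_hull : m ∈ convexHull ℝ (s : Set E) := by
    have := s.centerMass_mem_convexHull (fun i hi => (hpos i hi).le)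
      (by rw [hsum]; norm_num) (fun i hi => Finset.mem_coe.2 hi)
    simpa [Finset.centerMass, hsum, hm_def] using this
  have hmA : m ∈ affineSpan ℝ (convexHull ℝ (s : Set E)) := subset_affineSpan _ _ hm_hull
  -- the linear parametrization of the direction space
  let Ψ : (↥s → ℝ) →ₗ[ℝ] E :=
    { toFun := fun q => ∑ i : ↥s, q i • ((i : E) - α₀)
      map_add' := fun q r => by simp [add_smul, Finset.sum_add_distrib]
      map_smul' := fun t q => by simp [Finset.smul_sum, mul_smul] }
  have hΨmem : ∀ q, Ψ q ∈ vectorSpan ℝ (s : Set E) := fun q =>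
    Submodule.sum_mem _ fun i _ => Submodule.smul_mem _ _
      (by simpa using vsub_mem_vectorSpan ℝ (Finset.mem_coe.2 i.2) (Finset.mem_coe.2 hα₀))
  have hspan : vectorSpan ℝ (s : Set E) ≤ LinearMap.range Ψ := by
    rw [vectorSpan_eq_span_vsub_set_right ℝ (Finset.mem_coe.2 hα₀), Submodule.span_le]
    rintro x ⟨α, hα, rfl⟩
    refine ⟨Pi.single ⟨α, hα⟩ 1, ?_⟩
    simp [Ψ, Pi.single_apply, ite_smul]
  have hranget : LinearMap.range (Ψ.codRestrict (vectorSpan ℝ (s : Set E)) hΨmem) = ⊤ := by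
    rw [LinearMap.range_eq_top]
    rintro ⟨x, hx⟩
    obtain ⟨q, hq⟩ := hspan hx
    exact ⟨q, Subtype.ext hq⟩
  obtain ⟨L, hL⟩ := LinearMap.exists_rightInverse_of_surjective
    (Ψ.codRestrict (vectorSpan ℝ (s : Set E)) hΨmem) hranget
  have hΨL : ∀ x : vectorSpan ℝ (s : Set E), Ψ (L x) = (x : E) := by
    intro x
    have := congrArg (fun z : vectorSpan ℝ (s : Set E) => (z : E))
      (LinearMap.congr_fun hL x)
    simpa using this
  obtain ⟨C, hC, hCb⟩ : ∃ C : ℝ, 0 ≤ C ∧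
      ∀ x : vectorSpan ℝ (s : Set E), ‖L x‖ ≤ C * ‖x‖ :=
    ⟨‖LinearMap.toContinuousLinearMap L‖, ContinuousLinearMap.opNorm_nonneg _,
      fun x => (LinearMap.toContinuousLinearMap L).le_opNorm x⟩
  obtain ⟨δ, hδ, hδle⟩ : ∃ δ : ℝ, 0 < δ ∧ ∀ α ∈ s, δ ≤ p α :=
    ⟨s.inf' ⟨α₀, hα₀⟩ p, (Finset.lt_inf'_iff _).2 hpos, fun α hα => Finset.inf'_le p hα⟩
  obtain ⟨n, hn, hcard⟩ : ∃ n : ℝ, 0 ≤ n ∧ ((s.card : ℝ)) = n :=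
    ⟨(s.card : ℝ), by positivity, rfl⟩
  set ε := δ / ((n + 1) * (C + 1)) with hε_def
  have hε : 0 < ε := by positivity
  -- main inclusion
  have hsub : ∀ y, y ∈ affineSpan ℝ (convexHull ℝ (s : Set E)) → ‖y - m‖ < ε →
      y ∈ convexHull ℝ (s : Set E) := by
    intro y hyA hyd
    have hdirmem : y - m ∈ vectorSpan ℝ (s : Set E) := by
      have h1 := AffineSubspace.vsub_mem_direction hyA hmA
      rwa [affineSpan_convexHull, direction_affineSpan,
        vsub_eq_sub] at h1
    set wv : vectorSpan ℝ (s : Set E) := ⟨y - m, hdirmem⟩ with hwv_def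
    set r : ↥s → ℝ := L wv with hr_def
    have hrb : ∀ i : ↥s, |r i| ≤ C * ‖y - m‖ := by
      intro i
      calc |r i| = ‖r i‖ := (Real.norm_eq_abs _).symm
        _ ≤ ‖r‖ := norm_le_pi_norm r i
        _ ≤ C * ‖wv‖ := by rw [hr_def]; exact hCb wv
        _ = C * ‖y - m‖ := by rfl
    have hrs : |∑ i : ↥s, r i| ≤ n * (C * ‖y - m‖) := by
      calc |∑ i : ↥s, r i| ≤ ∑ i : ↥s, |r i| := Finset.abs_sum_le_sum_abs _ _
        _ ≤ ∑ _i : ↥s, C * ‖y - m‖ := Finset.sum_le_sum fun i _ => hrb i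
        _ = n * (C * ‖y - m‖) := by
            rw [Finset.sum_const, Finset.card_univ, Fintype.card_coe, nsmul_eq_mul, hcard]
    set q : E → ℝ := fun α => (if h : α ∈ s then r ⟨α, h⟩ else 0) -
      (if α = α₀ then ∑ i : ↥s, r i else 0) with hq_def
    have h1 : ∑ α ∈ s, (if h : α ∈ s then r ⟨α, h⟩ else 0) = ∑ i : ↥s, r i := by
      rw [← Finset.sum_attach s (fun α => if h : α ∈ s then r ⟨α, h⟩ else 0),
        Finset.univ_eq_attach]
      exact Finset.sum_congr rfl fun i _ => by simp
    have hq1 : ∑ α ∈ s, q α = 0 := by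
      simp only [hq_def]
      rw [Finset.sum_sub_distrib, h1, Finset.sum_ite_eq' s α₀ (fun _ => ∑ i : ↥s, r i),
        if_pos hα₀, sub_self]
    have hq2 : ∑ α ∈ s, q α • α = y - m := by
      have h4 : Ψ r = y - m := by rw [hr_def]; exact hΨL wv
      have h3 : Ψ r = ∑ i : ↥s, r i • (i : E) - (∑ i : ↥s, r i) • α₀ := by
        show ∑ i : ↥s, r i • ((i : E) - α₀) = _
        simp only [smul_sub]
        rw [Finset.sum_sub_distrib, Finset.sum_smul]
      have h5 : ∑ α ∈ s, (if h : α ∈ s then r ⟨α, h⟩ else 0) • α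
          = ∑ i : ↥s, r i • (i : E) := by
        rw [← Finset.sum_attach s (fun α => (if h : α ∈ s then r ⟨α, h⟩ else 0) • α),
          Finset.univ_eq_attach]
        exact Finset.sum_congr rfl fun i _ => by simp
      have h6 : ∑ α ∈ s, (if α = α₀ then ∑ i : ↥s, r i else 0) • α
          = (∑ i : ↥s, r i) • α₀ := by
        have : ∀ α ∈ s, (if α = α₀ then ∑ i : ↥s, r i else 0) • α
            = (if α = α₀ then (∑ i : ↥s, r i) • α else 0) := by
          intro α _
          split_ifs with h
          · rw [h]
          · rw [zero_smul]
        rw [Finset.sum_congr rfl this, Finset.sum_ite_eq' s α₀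
          (fun α => (∑ i : ↥s, r i) • α), if_pos hα₀]
      simp only [hq_def, sub_smul]
      rw [Finset.sum_sub_distrib, h5, h6, ← h3, h4]
    have hq3 : ∀ α ∈ s, 0 ≤ p α + q α := by
      intro α hα
      have hb1 : |q α| ≤ C * ‖y - m‖ + n * (C * ‖y - m‖) := by
        simp only [hq_def]
        have hA : |(if h : α ∈ s then r ⟨α, h⟩ else 0)| ≤ C * ‖y - m‖ := by
          rw [dif_pos hα]; exact hrb _
        have hB : |(if α = α₀ then ∑ i : ↥s, r i else 0)| ≤ n * (C * ‖y - m‖) := by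
          split_ifs
          · exact hrs
          · simp only [abs_zero]; positivity
        calc |(if h : α ∈ s then r ⟨α, h⟩ else 0) - (if α = α₀ then ∑ i : ↥s, r i else 0)|
            ≤ |(if h : α ∈ s then r ⟨α, h⟩ else 0)| + |(if α = α₀ then ∑ i : ↥s, r i else 0)| :=
              abs_sub _ _
          _ ≤ C * ‖y - m‖ + n * (C * ‖y - m‖) := add_le_add hA hB
      have hδα : δ ≤ p α := hδle α hα
      have hden : (0:ℝ) < (n + 1) * (C + 1) := by positivity
      have hKey : C * ‖y - m‖ + n * (C * ‖y - m‖) ≤ δ := by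
        have hK : ‖y - m‖ ≤ ε := hyd.le
        have h7 : C * ‖y - m‖ + n * (C * ‖y - m‖) = (n + 1) * C * ‖y - m‖ := by ring
        have h8 : (n + 1) * C * ‖y - m‖ ≤ (n + 1) * C * ε :=
          mul_le_mul_of_nonneg_left hK (by positivity)
        have h9 : (n + 1) * C * ε ≤ δ := by
          rw [hε_def, ← mul_div_assoc, div_le_iff₀ hden]
          nlinarith [hδ.le, hC, hn]
        linarith
      linarith [neg_abs_le (q α)]
    have hqs : ∑ α ∈ s, (p α + q α) = 1 := by
      rw [Finset.sum_add_distrib, hsum, hq1, add_zero]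
    have hqy : ∑ α ∈ s, (p α + q α) • α = y := by
      simp only [add_smul]
      rw [Finset.sum_add_distrib, ← hm_def, hq2]
      abel
    have := s.centerMass_mem_convexHull (fun α hα => hq3 α hα) (by rw [hqs]; norm_num)
      (fun α hα => Finset.mem_coe.2 hα)
    simpa [Finset.centerMass, hqs, hqy] using this
  rw [mem_intrinsicInterior]
  refine ⟨⟨m, hmA⟩, ?_, rfl⟩
  rw [mem_interior]
  refine ⟨((↑) : affineSpan ℝ (convexHull ℝ (s : Set E)) → E) ⁻¹' Metric.ball m ε,
    ?_, continuous_subtype_val.isOpen_preimage _ Metric.isOpen_ball, ?_⟩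
  · rintro ⟨y, hyA⟩ hy
    simp only [Set.mem_preimage, Metric.mem_ball, dist_eq_norm] at hy
    exact hsub y hyA hy
  · simp only [Set.mem_preimage, Metric.mem_ball]
    simpa using hε


/-- if `X ↦ ‖m_𝔞(exp(π X)v)‖²` attains its infimum over `𝔞` at `X₀`,
then the minimal convex combination `mcc(R(v))` lies in the intrinsic interior of
the convex hull of `R(v)`, and `m_𝔞(exp(π X₀)v) = mcc(R(v))`. -/
theorem momentMap_min_of_attains_inf
    {𝔞 V : Type*} [NormedAddCommGroup 𝔞] [InnerProductSpace ℝ 𝔞] [FiniteDimensional ℝ 𝔞]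
    [NormedAddCommGroup V] [InnerProductSpace ℝ V] [FiniteDimensional ℝ V]
    (π : 𝔞 →ₗ[ℝ] V →L[ℝ] V)
    (hsa : ∀ X : 𝔞, ∀ v w : V, ⟪(π X) v, w⟫_ℝ = ⟪v, (π X) w⟫_ℝ)
    (hcomm : ∀ X Y : 𝔞, Commute (π X) (π Y))
    (ΔV : Finset 𝔞) (v : V) (hv : v ≠ 0)
    -- `c α` is the component of `v` in the weight space `V_α`:
    (c : 𝔞 → V)
    (hc : ∀ α ∈ ΔV, ∀ X : 𝔞, (π X) (c α) = ⟪α, X⟫_ℝ • c α)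
    (hsum : v = ∑ α ∈ ΔV, c α)
    (Rv : Finset 𝔞) (hRv : Rv = ΔV.filter fun α => c α ≠ 0)
    (X₀ : 𝔞)
    (hmin : ∀ X : 𝔞, ‖momentMap π ((NormedSpace.exp (π X₀)) v)‖ ≤
      ‖momentMap π ((NormedSpace.exp (π X)) v)‖)
    -- `mcc` is the (unique) point of minimal norm in the convex hull of `R(v)`:
    (mcc : 𝔞) (hmcc₁ : mcc ∈ convexHull ℝ (Rv : Set 𝔞))
    (hmcc₂ : ∀ y ∈ convexHull ℝ (Rv : Set 𝔞), ‖mcc‖ ≤ ‖y‖) :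
    mcc ∈ intrinsicInterior ℝ (convexHull ℝ (Rv : Set 𝔞)) ∧
    momentMap π ((NormedSpace.exp (π X₀)) v) = mcc := by
  classical
  -- basic facts about `Rv`
  have hRvΔ : ∀ α ∈ Rv, α ∈ ΔV := by
    intro α hα; rw [hRv] at hα; exact (Finset.mem_filter.1 hα).1
  have hRvc : ∀ α ∈ Rv, c α ≠ 0 := by
    intro α hα; rw [hRv] at hα; exact (Finset.mem_filter.1 hα).2
  have hRvne : Rv.Nonempty := by
    rcases Rv.eq_empty_or_nonempty with h | h
    · exfalso
      apply hv
      rw [hsum]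
      refine Finset.sum_eq_zero fun α hα => ?_
      by_contra h0
      have : α ∈ Rv := by rw [hRv]; exact Finset.mem_filter.2 ⟨hα, h0⟩
      rw [h] at this
      exact absurd this (Finset.notMem_empty α)
    · exact h
  -- orthogonality of the weight components
  have horth : ∀ α ∈ ΔV, ∀ β ∈ ΔV, α ≠ β → ⟪c α, c β⟫_ℝ = 0 := by
    intro α hα β hβ hne
    have h1 := hsa (α - β) (c α) (c β)
    rw [hc α hα, hc β hβ, real_inner_smul_left, real_inner_smul_right] at h1
    have h2 : (⟪α, α - β⟫_ℝ - ⟪β, α - β⟫_ℝ) * ⟪c α, c β⟫_ℝ = 0 := by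
      rw [sub_mul]; linarith
    have h3 : ⟪α, α - β⟫_ℝ - ⟪β, α - β⟫_ℝ = ‖α - β‖ ^ 2 := by
      rw [← real_inner_self_eq_norm_sq, inner_sub_left]
    have h4 : (0 : ℝ) < ‖α - β‖ ^ 2 :=
      pow_pos (norm_sub_pos_iff.2 hne) 2
    rcases mul_eq_zero.1 h2 with h | h
    · rw [h3] at h; exact absurd h (ne_of_gt h4)
    · exact h
  -- the image of `v` under `exp (π X)`
  have hexp : ∀ X : 𝔞, (NormedSpace.exp (π X)) v =
      ∑ α ∈ Rv, Real.exp ⟪α, X⟫_ℝ • c α := by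
    intro X
    have h1 : (NormedSpace.exp (π X)) v = ∑ α ∈ ΔV, Real.exp ⟪α, X⟫_ℝ • c α := by
      rw [hsum, map_sum]
      exact Finset.sum_congr rfl fun α hα =>
        exp_apply_eigenvector (π X) (c α) _ (hc α hα X)
    rw [h1, hRv]
    refine (Finset.sum_filter_of_ne fun α hα hne => ?_).symm
    intro h0
    exact hne (by rw [h0, smul_zero])
  -- inner products of combinations of the weight components
  have hinner : ∀ (a b : 𝔞 → ℝ),
      ⟪∑ α ∈ Rv, a α • c α, ∑ β ∈ Rv, b β • c β⟫_ℝ =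
        ∑ α ∈ Rv, a α * b α * ‖c α‖ ^ 2 := by
    intro a b
    rw [sum_inner]
    refine Finset.sum_congr rfl fun α hα => ?_
    rw [inner_sum, Finset.sum_eq_single α]
    · rw [real_inner_smul_left, real_inner_smul_right, real_inner_self_eq_norm_sq]
      ring
    · intro β hβ hne
      rw [real_inner_smul_left, real_inner_smul_right,
        horth α (hRvΔ α hα) β (hRvΔ β hβ) (Ne.symm hne)]
      ring
    · intro h; exact absurd hα h
  -- the explicit formula for the moment map along the orbit
  have hM : ∀ X : 𝔞, momentMap π ((NormedSpace.exp (π X)) v) =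
      (∑ α ∈ Rv, Real.exp ⟪α, X⟫_ℝ ^ 2 * ‖c α‖ ^ 2)⁻¹ •
        ∑ α ∈ Rv, (Real.exp ⟪α, X⟫_ℝ ^ 2 * ‖c α‖ ^ 2) • α := by
    intro X
    refine ext_inner_right ℝ fun Y => ?_
    rw [momentMap_inner', hexp X]
    have hπ : (π Y) (∑ α ∈ Rv, Real.exp ⟪α, X⟫_ℝ • c α) =
        ∑ α ∈ Rv, (Real.exp ⟪α, X⟫_ℝ * ⟪α, Y⟫_ℝ) • c α := by
      rw [map_sum]
      refine Finset.sum_congr rfl fun α hα => ?_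
      rw [map_smul, hc α (hRvΔ α hα), smul_smul]
    rw [hπ]
    have hnorm : ‖∑ α ∈ Rv, Real.exp ⟪α, X⟫_ℝ • c α‖ ^ 2 =
        ∑ α ∈ Rv, Real.exp ⟪α, X⟫_ℝ ^ 2 * ‖c α‖ ^ 2 := by
      rw [← real_inner_self_eq_norm_sq, hinner]
      exact Finset.sum_congr rfl fun α _ => by ring
    rw [hinner, hnorm, real_inner_smul_left, sum_inner]
    simp only [real_inner_smul_left]
    rw [div_eq_inv_mul]
    congr 1
    exact Finset.sum_congr rfl fun α _ => by ring
  have hZpos : 0 < ∑ α ∈ Rv, Real.exp ⟪α, X₀⟫_ℝ ^ 2 * ‖c α‖ ^ 2 :=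
    Finset.sum_pos (fun α hα => by
      have : 0 < ‖c α‖ := norm_pos_iff.2 (hRvc α hα)
      positivity) hRvne
  -- apply the analytic core lemma
  set m₀ := momentMap π ((NormedSpace.exp (π X₀)) v) with hm₀_def
  have hwpos : ∀ α ∈ Rv, 0 < Real.exp ⟪α, X₀⟫_ℝ ^ 2 * ‖c α‖ ^ 2 := fun α hα => by
    have : 0 < ‖c α‖ := norm_pos_iff.2 (hRvc α hα)
    positivity
  have hcore : ∀ α ∈ Rv, ⟪α, m₀⟫_ℝ = ‖m₀‖ ^ 2 := by
    refine core_min Rv hRvne (fun α => Real.exp ⟪α, X₀⟫_ℝ ^ 2 * ‖c α‖ ^ 2) hwpos m₀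
      (hM X₀) (fun t => ?_)
    have h1 := hmin (X₀ + t • m₀)
    rw [hM (X₀ + t • m₀)] at h1
    have h2 : ∀ α ∈ Rv, Real.exp ⟪α, X₀ + t • m₀⟫_ℝ ^ 2 * ‖c α‖ ^ 2 =
        Real.exp ⟪α, X₀⟫_ℝ ^ 2 * ‖c α‖ ^ 2 * Real.exp (2 * ⟪α, m₀⟫_ℝ * t) := by
      intro α _
      rw [inner_add_right, real_inner_smul_right, exp_sq_eq, exp_sq_eq,
        show 2 * (⟪α, X₀⟫_ℝ + t * ⟪α, m₀⟫_ℝ) = 2 * ⟪α, X₀⟫_ℝ + 2 * ⟪α, m₀⟫_ℝ * t by ring,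
        Real.exp_add]
      ring
    have h3 : ∀ α ∈ Rv, (Real.exp ⟪α, X₀ + t • m₀⟫_ℝ ^ 2 * ‖c α‖ ^ 2) • α =
        (Real.exp ⟪α, X₀⟫_ℝ ^ 2 * ‖c α‖ ^ 2 * Real.exp (2 * ⟪α, m₀⟫_ℝ * t)) • α :=
      fun α hα => by rw [h2 α hα]
    rw [Finset.sum_congr rfl h2, Finset.sum_congr rfl h3] at h1
    exact h1
  -- `m₀` lies in the intrinsic interior of the hull
  have hm₀eq : m₀ = ∑ α ∈ Rv,
      ((∑ β ∈ Rv, Real.exp ⟪β, X₀⟫_ℝ ^ 2 * ‖c β‖ ^ 2)⁻¹ *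
        (Real.exp ⟪α, X₀⟫_ℝ ^ 2 * ‖c α‖ ^ 2)) • α := by
    rw [hm₀_def, hM X₀, Finset.smul_sum]
    exact Finset.sum_congr rfl fun α _ => by rw [smul_smul]
  have hm₀int : m₀ ∈ intrinsicInterior ℝ (convexHull ℝ (Rv : Set 𝔞)) := by
    rw [hm₀eq]
    refine sum_smul_mem_intrinsicInterior Rv _
      (fun α hα => mul_pos (inv_pos.2 hZpos) (hwpos α hα)) ?_
    rw [← Finset.mul_sum, inv_mul_cancel₀ (ne_of_gt hZpos)]
  have hm₀hull : m₀ ∈ convexHull ℝ (Rv : Set 𝔞) := intrinsicInterior_subset hm₀int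
  -- every point of the hull has the same inner product with `m₀`
  have hhyper : ∀ y ∈ convexHull ℝ (Rv : Set 𝔞), ⟪y, m₀⟫_ℝ = ‖m₀‖ ^ 2 := by
    intro y hy
    have hconv : Convex ℝ {x : 𝔞 | ⟪x, m₀⟫_ℝ = ‖m₀‖ ^ 2} :=
      convex_hyperplane (𝕜 := ℝ)
        ⟨fun a b => inner_add_left a b m₀, fun r a => real_inner_smul_left a m₀ r⟩ _
    have hsub : (Rv : Set 𝔞) ⊆ {x : 𝔞 | ⟪x, m₀⟫_ℝ = ‖m₀‖ ^ 2} := fun α hα =>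
      hcore α (Finset.mem_coe.1 hα)
    exact convexHull_min hsub hconv hy
  -- conclude `m₀ = mcc`
  have hle : ‖mcc‖ ≤ ‖m₀‖ := hmcc₂ m₀ hm₀hull
  have hmcc_inner : ⟪mcc, m₀⟫_ℝ = ‖m₀‖ ^ 2 := hhyper mcc hmcc₁
  have hdiff : ‖m₀ - mcc‖ ^ 2 ≤ 0 := by
    rw [norm_sub_sq_real, real_inner_comm, hmcc_inner]
    nlinarith [norm_nonneg m₀, norm_nonneg mcc]
  have heq : m₀ = mcc := by
    have h1 : ‖m₀ - mcc‖ ^ 2 = 0 := le_antisymm hdiff (sq_nonneg _)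
    have h2 : m₀ - mcc = 0 := norm_eq_zero.1 (pow_eq_zero_iff two_ne_zero |>.1 h1)
    exact sub_eq_zero.1 h2
  exact ⟨heq ▸ hm₀int, heq⟩
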